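/- For all nonnegative measurable f, g on (0,∞), every α ∈ [0,n), and every j ∈ ℕ₀: ((n−α)/n)^j ∫_0^∞ (H_α∘P)^j f · g ≤ ∫_0^∞ f · (H_α∘P)^j g ≤ (n/(n−α))^j ∫_0^∞ (H_α∘P)^j f · g. (Here (H_α∘P)^j denotes the j-th iterate.) -/
import Mathlib


open MeasureTheory Set Real
open scoped ENNReal

noncomputable def phi (n : ℕ) (α : ℝ) (t : ℝ) : ℝ := min (t ^ (-1 + α / n)) t⁻¹

noncomputable def Pop (f : ℝ → ℝ≥0∞) (t : ℝ) : ℝ≥0∞ :=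
  (∫⁻ s in Set.Ioo (0 : ℝ) t, f s) / ENNReal.ofReal t

noncomputable def Hop (n : ℕ) (α : ℝ) (f : ℝ → ℝ≥0∞) (t : ℝ) : ℝ≥0∞ :=
  ∫⁻ s in Set.Ioi t, f s * ENNReal.ofReal (phi n α s)

/-- The composition `H_α ∘ P`. -/
noncomputable def HP (n : ℕ) (α : ℝ) (f : ℝ → ℝ≥0∞) : ℝ → ℝ≥0∞ :=
  Hop n α (Pop f)

lemma phi_measurable (n : ℕ) (α : ℝ) : Measurable (phi n α) :=
  (measurable_id.pow measurable_const).min measurable_inv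

lemma meas_set1 : MeasurableSet {p : ℝ × ℝ | 0 < p.1 ∧ p.1 < p.2} :=
  (measurableSet_lt measurable_const measurable_fst).inter
    (measurableSet_lt measurable_fst measurable_snd)

/-- measurability of `s ↦ ∫⁻ t in Ioo 0 s, f t` -/
lemma meas_G {f : ℝ → ℝ≥0∞} (hf : Measurable f) :
    Measurable fun s : ℝ => ∫⁻ t in Ioo (0 : ℝ) s, f t := by
  have h1 : ∀ s : ℝ, (∫⁻ t in Ioo (0 : ℝ) s, f t)
      = ∫⁻ t, {p : ℝ × ℝ | 0 < p.2 ∧ p.2 < p.1}.indicator (fun p => f p.2) (s, t) := by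
    intro s
    rw [← lintegral_indicator measurableSet_Ioo]
    congr 1 with t
  simp only [h1]
  apply Measurable.lintegral_prod_right'
  exact ((hf.comp measurable_snd)).indicator
    ((measurableSet_lt measurable_const measurable_snd).inter
      (measurableSet_lt measurable_snd measurable_fst))

/-- measurability of `t ↦ ∫⁻ s in Ioi t, h s` -/
lemma meas_Hgen {h : ℝ → ℝ≥0∞} (hh : Measurable h) :
    Measurable fun t : ℝ => ∫⁻ s in Ioi t, h s := by
  have h1 : ∀ t : ℝ, (∫⁻ s in Ioi t, h s)
      = ∫⁻ s, {p : ℝ × ℝ | p.1 < p.2}.indicator (fun p => h p.2) (t, s) := by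
    intro t
    rw [← lintegral_indicator measurableSet_Ioi]
    congr 1 with s
  simp only [h1]
  apply Measurable.lintegral_prod_right'
  exact ((hh.comp measurable_snd)).indicator
    (measurableSet_lt measurable_fst measurable_snd)

lemma meas_Pop {f : ℝ → ℝ≥0∞} (hf : Measurable f) : Measurable (Pop f) :=
  (meas_G hf).div (ENNReal.measurable_ofReal.comp measurable_id)

lemma meas_Hop (n : ℕ) (α : ℝ) {h : ℝ → ℝ≥0∞} (hh : Measurable h) :
    Measurable (Hop n α h) :=
  meas_Hgen (hh.mul (ENNReal.measurable_ofReal.comp (phi_measurable n α)))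

lemma meas_HP (n : ℕ) (α : ℝ) {f : ℝ → ℝ≥0∞} (hf : Measurable f) :
    Measurable (HP n α f) := meas_Hop n α (meas_Pop hf)

lemma meas_HP_iter (n : ℕ) (α : ℝ) (j : ℕ) {f : ℝ → ℝ≥0∞} (hf : Measurable f) :
    Measurable ((HP n α)^[j] f) := by
  induction j generalizing f with
  | zero => simpa using hf
  | succ k ih =>
      rw [Function.iterate_succ_apply]
      exact ih (meas_HP n α hf)

/-- The key Fubini swap. -/
lemma swap_lemma {h g : ℝ → ℝ≥0∞} (hh : Measurable h) (hg : Measurable g) :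
    ∫⁻ t in Ioi (0 : ℝ), (∫⁻ s in Ioi t, h s) * g t
      = ∫⁻ s in Ioi (0 : ℝ), h s * ∫⁻ t in Ioo (0 : ℝ) s, g t := by
  have hkm : AEMeasurable
      (Function.uncurry fun t s : ℝ =>
        {p : ℝ × ℝ | 0 < p.1 ∧ p.1 < p.2}.indicator (fun p => h p.2 * g p.1) (t, s))
      ((volume : Measure ℝ).prod volume) := by
    apply Measurable.aemeasurable
    exact (((hh.comp measurable_snd).mul (hg.comp measurable_fst))).indicator meas_set1
  have kval : ∀ t s : ℝ,
      {p : ℝ × ℝ | 0 < p.1 ∧ p.1 < p.2}.indicator (fun p => h p.2 * g p.1) (t, s)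
        = if 0 < t ∧ t < s then h s * g t else 0 := by
    intro t s
    simp only [indicator_apply, mem_setOf_eq]
  have L : ∫⁻ t in Ioi (0 : ℝ), (∫⁻ s in Ioi t, h s) * g t
      = ∫⁻ t, ∫⁻ s, {p : ℝ × ℝ | 0 < p.1 ∧ p.1 < p.2}.indicator
          (fun p => h p.2 * g p.1) (t, s) := by
    rw [← lintegral_indicator measurableSet_Ioi]
    congr 1 with t
    simp only [kval]
    by_cases ht : (0 : ℝ) < t
    · rw [indicator_of_mem (mem_Ioi.2 ht)]
      rw [← lintegral_mul_const _ hh, ← lintegral_indicator measurableSet_Ioi]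
      congr 1 with s
      simp only [indicator_apply, mem_Ioi]
      by_cases hs : t < s
      · simp [hs, ht]
      · simp [hs]
    · rw [indicator_of_notMem (by simpa using ht)]
      have : ∀ s : ℝ, (if 0 < t ∧ t < s then h s * g t else 0) = 0 := by
        intro s; simp [ht]
      simp [this]
  have R : ∫⁻ s in Ioi (0 : ℝ), h s * ∫⁻ t in Ioo (0 : ℝ) s, g t
      = ∫⁻ s, ∫⁻ t, {p : ℝ × ℝ | 0 < p.1 ∧ p.1 < p.2}.indicator
          (fun p => h p.2 * g p.1) (t, s) := by
    rw [← lintegral_indicator measurableSet_Ioi]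
    congr 1 with s
    simp only [kval]
    have inner : (∫⁻ t, if 0 < t ∧ t < s then h s * g t else 0)
        = ∫⁻ t in Ioo (0 : ℝ) s, h s * g t := by
      rw [← lintegral_indicator measurableSet_Ioo]
      congr 1 with t
      simp only [indicator_apply, mem_Ioo]
    rw [inner]
    by_cases hs : (0 : ℝ) < s
    · rw [indicator_of_mem (mem_Ioi.2 hs), lintegral_const_mul _ hg]
    · rw [indicator_of_notMem (by simpa using hs)]
      rw [Ioo_eq_empty hs]
      simp
  rw [L, R, lintegral_lintegral_swap hkm]

/-- `HP` is self-adjoint. -/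
lemma HP_selfadjoint (n : ℕ) (α : ℝ) {f g : ℝ → ℝ≥0∞} (hf : Measurable f)
    (hg : Measurable g) :
    ∫⁻ t in Ioi (0 : ℝ), HP n α f t * g t = ∫⁻ t in Ioi (0 : ℝ), f t * HP n α g t := by
  have hPf : Measurable fun s => Pop f s * ENNReal.ofReal (phi n α s) :=
    (meas_Pop hf).mul (ENNReal.measurable_ofReal.comp (phi_measurable n α))
  have hPg : Measurable fun s => Pop g s * ENNReal.ofReal (phi n α s) :=
    (meas_Pop hg).mul (ENNReal.measurable_ofReal.comp (phi_measurable n α))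
  calc ∫⁻ t in Ioi (0 : ℝ), HP n α f t * g t
      = ∫⁻ s in Ioi (0 : ℝ), (Pop f s * ENNReal.ofReal (phi n α s)) * ∫⁻ t in Ioo (0 : ℝ) s, g t :=
        swap_lemma hPf hg
    _ = ∫⁻ s in Ioi (0 : ℝ), (Pop g s * ENNReal.ofReal (phi n α s)) * ∫⁻ t in Ioo (0 : ℝ) s, f t := by
        congr 1 with s
        simp only [Pop, div_eq_mul_inv]
        ring
    _ = ∫⁻ t in Ioi (0 : ℝ), (∫⁻ s in Ioi t, Pop g s * ENNReal.ofReal (phi n α s)) * f t :=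
        (swap_lemma hPg hf).symm
    _ = ∫⁻ t in Ioi (0 : ℝ), f t * HP n α g t := by
        congr 1 with t
        rw [mul_comm]; rfl

lemma HP_iter_selfadjoint (n : ℕ) (α : ℝ) (j : ℕ) {f g : ℝ → ℝ≥0∞}
    (hf : Measurable f) (hg : Measurable g) :
    ∫⁻ t in Ioi (0 : ℝ), (HP n α)^[j] f t * g t
      = ∫⁻ t in Ioi (0 : ℝ), f t * (HP n α)^[j] g t := by
  induction j generalizing f with
  | zero => simp
  | succ k ih =>
      calc ∫⁻ t in Ioi (0 : ℝ), (HP n α)^[k+1] f t * g t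
          = ∫⁻ t in Ioi (0 : ℝ), (HP n α)^[k] (HP n α f) t * g t := by
            rw [Function.iterate_succ_apply]
        _ = ∫⁻ t in Ioi (0 : ℝ), HP n α f t * (HP n α)^[k] g t := ih (meas_HP n α hf)
        _ = ∫⁻ t in Ioi (0 : ℝ), f t * HP n α ((HP n α)^[k] g) t :=
            HP_selfadjoint n α hf (meas_HP_iter n α k hg)
        _ = ∫⁻ t in Ioi (0 : ℝ), f t * (HP n α)^[k+1] g t := by
            rw [Function.iterate_succ_apply']

theorem stmt2 (n : ℕ) (hn : 2 ≤ n) (α : ℝ) (hα0 : 0 ≤ α) (hαn : α < n) (j : ℕ)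
    (f g : ℝ → ℝ≥0∞) (hf : Measurable f) (hg : Measurable g) :
    ENNReal.ofReal ((((n : ℝ) - α) / n) ^ j) *
        (∫⁻ t in Ioi (0 : ℝ), (HP n α)^[j] f t * g t) ≤
      (∫⁻ t in Ioi (0 : ℝ), f t * (HP n α)^[j] g t) ∧
    (∫⁻ t in Ioi (0 : ℝ), f t * (HP n α)^[j] g t) ≤
      ENNReal.ofReal (((n : ℝ) / ((n : ℝ) - α)) ^ j) *
        ∫⁻ t in Ioi (0 : ℝ), (HP n α)^[j] f t * g t := by
  have key := HP_iter_selfadjoint n α j hf hg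
  have hnpos : (0 : ℝ) < n := by positivity
  constructor
  · rw [key]
    have h1 : ENNReal.ofReal ((((n : ℝ) - α) / n) ^ j) ≤ 1 := by
      rw [← ENNReal.ofReal_one]
      apply ENNReal.ofReal_le_ofReal
      apply pow_le_one₀
      · exact div_nonneg (by linarith) hnpos.le
      · rw [div_le_one hnpos]; linarith
    calc ENNReal.ofReal ((((n : ℝ) - α) / n) ^ j) * (∫⁻ t in Ioi (0 : ℝ), f t * (HP n α)^[j] g t)
        ≤ 1 * (∫⁻ t in Ioi (0 : ℝ), f t * (HP n α)^[j] g t) := mul_le_mul_left h1 _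
      _ = _ := one_mul _
  · rw [key]
    have h1 : (1 : ℝ≥0∞) ≤ ENNReal.ofReal (((n : ℝ) / ((n : ℝ) - α)) ^ j) := by
      rw [← ENNReal.ofReal_one]
      apply ENNReal.ofReal_le_ofReal
      apply one_le_pow₀
      rw [le_div_iff₀ (by linarith)]
      linarith
    calc (∫⁻ t in Ioi (0 : ℝ), f t * (HP n α)^[j] g t)
        = 1 * (∫⁻ t in Ioi (0 : ℝ), f t * (HP n α)^[j] g t) := (one_mul _).symm
      _ ≤ _ := mul_le_mul_left h1 _
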